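/- For real numbers r > 0, T > r, L > 0, a ≥ 0, b > 0, the infimum ρ_T²(a,b) := inf_{s ∈ (r,T]} ( a²/(s−r) + s L² b² ) equals a²/(T−r) + T L² b² if T ≤ r + a/(L b), and equals 2 L a b + r L² b² if T ≥ r + a/(L b). -/

import Mathlib

/-- Explicit computation of the Harnack exponent
`ρ_T²(a,b) = inf_{s ∈ (r,T]} (a²/(s-r) + s L² b²)`. -/
theorem rho_explicit (r T L a b : ℝ) (hr : 0 < r) (hT : r < T) (hL : 0 < L)
    (ha : 0 ≤ a) (hb : 0 < b) :
    (T ≤ r + a / (L * b) →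
        sInf ((fun s => a ^ 2 / (s - r) + s * L ^ 2 * b ^ 2) '' Set.Ioc r T) =
          a ^ 2 / (T - r) + T * L ^ 2 * b ^ 2) ∧
      (r + a / (L * b) ≤ T →
        sInf ((fun s => a ^ 2 / (s - r) + s * L ^ 2 * b ^ 2) '' Set.Ioc r T) =
          2 * L * a * b + r * L ^ 2 * b ^ 2) := by
  have hLb : 0 < L * b := mul_pos hL hb
  have key : ∀ s ∈ Set.Ioc r T,
      2*L*a*b + r*L^2*b^2 ≤ a^2/(s-r) + s*L^2*b^2 := by
    intro s hs
    have ht : 0 < s - r := sub_pos.2 hs.1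
    have hid : a^2/(s-r) + s*L^2*b^2 - (2*L*a*b + r*L^2*b^2)
        = (a - (s-r)*(L*b))^2/(s-r) := by
      field_simp; ring
    nlinarith [div_nonneg (sq_nonneg (a - (s-r)*(L*b))) ht.le]
  constructor
  · intro hcase
    apply IsLeast.csInf_eq
    constructor
    · exact ⟨T, ⟨hT, le_refl T⟩, rfl⟩
    · rintro y ⟨s, ⟨hs1, hs2⟩, rfl⟩
      have hu : 0 < s - r := sub_pos.2 hs1
      have hv : 0 < T - r := sub_pos.2 hT
      have huv : s - r ≤ T - r := by linarith
      have hva : (T - r) * (L * b) ≤ a := by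
        rw [← le_div_iff₀ hLb]; linarith
      have h1 : a^2/(s-r) - a^2/(T-r) = a^2 * ((T-r)-(s-r))/((s-r)*(T-r)) := by
        field_simp
      have h3 : ((T-r)*(L*b))^2 ≤ a^2 := by
        nlinarith [mul_nonneg hv.le hLb.le]
      have h4 : (s-r)*(T-r)*(L*b)^2 ≤ a^2 := by
        nlinarith [mul_le_mul_of_nonneg_right
          (mul_le_mul_of_nonneg_right huv hv.le) (sq_nonneg (L*b))]
      have hd : 0 ≤ T - s := by linarith
      have h2 : ((T-r)-(s-r))*(L*b)^2 ≤ a^2 * ((T-r)-(s-r))/((s-r)*(T-r)) := by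
        rw [le_div_iff₀ (mul_pos hu hv)]
        nlinarith [mul_le_mul_of_nonneg_left h4 hd]
      dsimp only
      nlinarith [h1, h2]
  · intro hcase
    rcases eq_or_lt_of_le ha with h0 | h0
    · subst h0
      apply IsGLB.csInf_eq
      · constructor
        · rintro y ⟨s, hs, rfl⟩
          exact key s hs
        · intro w hw
          apply le_of_forall_pos_le_add
          intro ε hε
          have hc2 : 0 < L^2*b^2 := by positivity
          set s := min T (r + ε/(L^2*b^2)) with hsdef
          have hs1 : r < s := lt_min hT (lt_add_of_pos_right r (div_pos hε hc2))
          have hs2 : s ≤ T := min_le_left _ _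
          have hw' := hw ⟨s, ⟨hs1, hs2⟩, rfl⟩
          have hs3 : s ≤ r + ε/(L^2*b^2) := min_le_right _ _
          have h4 : s*L^2*b^2 ≤ r*L^2*b^2 + ε := by
            have := mul_le_mul_of_nonneg_right hs3 hc2.le
            rw [add_mul, div_mul_cancel₀ _ (ne_of_gt hc2)] at this
            linarith
          have h5 : (0:ℝ)^2/(s-r) = 0 := by norm_num
          simp only [h5] at hw'
          nlinarith [hw']
      · exact ⟨_, ⟨T, ⟨hT, le_refl T⟩, rfl⟩⟩
    · apply IsLeast.csInf_eq
      constructor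
      · refine ⟨r + a/(L*b), ⟨lt_add_of_pos_right r (div_pos h0 hLb), hcase⟩, ?_⟩
        have hane : a ≠ 0 := ne_of_gt h0
        have hLbne : L*b ≠ 0 := ne_of_gt hLb
        dsimp only
        rw [add_sub_cancel_left, div_div_eq_mul_div]
        field_simp
        ring
      · rintro y ⟨s, hs, rfl⟩
        exact key s hs
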